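/- Let X be a locally compact topological space, let P be the set of nonempty open subsets of X, and partially order P by O₁ ≤ O₂ if and only if O₁ = O₂ or O₂ is compact in O₁. Then two elements O₁, O₂ of P have a common upper bound in (P, ≤) if and only if O₁ ∩ O₂ ≠ ∅; consequently, if X is ccc then (P, ≤) is upwards-ccc, and for every dense open set O* of X the set {O ∈ P : O ⊆ O*} is cofinal in (P, ≤). -/
import Mathlib


/-- A topological space is ccc if any uncountable collection of nonempty open sets
has two distinct members with nonempty intersection. -/
def CCCSpace (X : Type) [TopologicalSpace X] : Prop :=
  ∀ 𝒞 : Set (Set X), (∀ U ∈ 𝒞, IsOpen U ∧ U.Nonempty) → ¬ 𝒞.Countable →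
    ∃ U ∈ 𝒞, ∃ V ∈ 𝒞, U ≠ V ∧ (U ∩ V).Nonempty

/-- A space is locally compact if every open set contains a compact neighborhood
of each of its points. -/
def LocCompactSp (X : Type) [TopologicalSpace X] : Prop :=
  ∀ O : Set X, IsOpen O → ∀ x ∈ O,
    ∃ K U : Set X, IsCompact K ∧ IsOpen U ∧ x ∈ U ∧ U ⊆ K ∧ K ⊆ O

/-- A subset is irreducible if it is closed, nonempty, and is not the union of
two proper closed subsets. -/
def IrredSet {X : Type} [TopologicalSpace X] (C : Set X) : Prop :=
  IsClosed C ∧ C.Nonempty ∧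
    ∀ A B : Set X, IsClosed A → IsClosed B → C = A ∪ B → C = A ∨ C = B

/-- A space is sober if it is T0 and every irreducible subset is the closure of a point. -/
def SoberSp (X : Type) [TopologicalSpace X] : Prop :=
  T0Space X ∧ ∀ C : Set X, IrredSet C → ∃ x : X, C = closure {x}

/-- `U` is compact in `V` if every open cover of `V` has a finite subcollection covering `U`. -/
def CompactIn {X : Type} [TopologicalSpace X] (U V : Set X) : Prop :=
  ∀ 𝒞 : Set (Set X), (∀ W ∈ 𝒞, IsOpen W) → V ⊆ ⋃₀ 𝒞 →
    ∃ 𝒻 : Set (Set X), 𝒻 ⊆ 𝒞 ∧ 𝒻.Finite ∧ U ⊆ ⋃₀ 𝒻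

/-- A space is core compact if every open set `O` is the union of the open sets
`O'` with `O'` compact in `O`. -/
def CoreCompact (X : Type) [TopologicalSpace X] : Prop :=
  ∀ O : Set X, IsOpen O → O = ⋃₀ {O' : Set X | IsOpen O' ∧ CompactIn O' O}

/-- A space is supersober if it is T0 and every ultrafilter has either the empty set
or the closure of a point as its set of limits. -/
def SuperSober (X : Type) [TopologicalSpace X] : Prop :=
  T0Space X ∧ ∀ F : Ultrafilter X,
    {x : X | (F : Filter X) ≤ nhds x} = (∅ : Set X) ∨
      ∃ y : X, {x : X | (F : Filter X) ≤ nhds x} = closure {y}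

/-- A poset is upwards-ccc if any uncountable subset has two distinct members with
a common upper bound. -/
def UpCCC (P : Type) [PartialOrder P] : Prop :=
  ∀ S : Set P, ¬ S.Countable → ∃ x ∈ S, ∃ y ∈ S, x ≠ y ∧ ∃ z : P, x ≤ z ∧ y ≤ z

/-- A subset of a poset is cofinal if every element of the poset is below some element of it. -/
def IsCofinalIn {P : Type} [PartialOrder P] (d : Set P) : Prop :=
  ∀ p : P, ∃ q ∈ d, p ≤ q

/-- A subset `R` of a poset is upwards-centered if every finite subset of `R`
has an upper bound in the poset. -/
def UpCentered {P : Type} [PartialOrder P] (R : Set P) : Prop :=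
  ∀ F : Set P, F ⊆ R → F.Finite → ∃ z : P, ∀ x ∈ F, x ≤ z

/-- A poset is upwards-σ-centered if it is the union of countably many
upwards-centered subsets. -/
def UpSigmaCentered (P : Type) [PartialOrder P] : Prop :=
  ∃ C : ℕ → Set P, (∀ n, UpCentered (C n)) ∧ (⋃ n, C n) = Set.univ

/-- Witness for the defining property of the cardinal 𝔪 at cardinal `κ`:
there are a nonempty upwards-ccc poset `P` and κ cofinal subsets of `P`
such that no upwards-directed subset of `P` meets every one of them. -/
def MWitness (κ : Cardinal) : Prop :=
  ∃ (P : Type) (inst : PartialOrder P), Nonempty P ∧ @UpCCC P inst ∧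
    ∃ D : Set (Set P), Cardinal.mk ↥D = κ ∧ (∀ d ∈ D, @IsCofinalIn P inst d) ∧
      ¬ ∃ S : Set P, DirectedOn inst.le S ∧ ∀ d ∈ D, (S ∩ d).Nonempty

/-- The cardinal 𝔪, the least cardinal admitting an `MWitness`. -/
noncomputable def cardM : Cardinal := sInf {κ : Cardinal | MWitness κ}

/-- Witness for the defining property of the cardinal 𝔭 at cardinal `κ`:
there are a nonempty upwards-σ-centered poset `P` and κ cofinal subsets of `P`
such that no upwards-directed subset of `P` meets every one of them. -/
def PWitness (κ : Cardinal) : Prop :=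
  ∃ (P : Type) (inst : PartialOrder P), Nonempty P ∧ @UpSigmaCentered P inst ∧
    ∃ D : Set (Set P), Cardinal.mk ↥D = κ ∧ (∀ d ∈ D, @IsCofinalIn P inst d) ∧
      ¬ ∃ S : Set P, DirectedOn inst.le S ∧ ∀ d ∈ D, (S ∩ d).Nonempty

/-- The cardinal 𝔭, the least cardinal admitting a `PWitness`. -/
noncomputable def cardP : Cardinal := sInf {κ : Cardinal | PWitness κ}

/-- The nonempty open subsets of a space. -/
def NonemptyOpens (X : Type) [TopologicalSpace X] : Type :=
  {U : Set X // IsOpen U ∧ U.Nonempty}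

/-- The nonempty open sets, partially ordered by reverse inclusion. -/
instance {X : Type} [TopologicalSpace X] : PartialOrder (NonemptyOpens X) where
  le U V := V.1 ⊆ U.1
  le_refl U := subset_rfl
  le_trans a b c h₁ h₂ := Set.Subset.trans h₂ h₁
  le_antisymm a b h₁ h₂ := Subtype.ext (Set.Subset.antisymm h₂ h₁)

/-- A space is σ-centered if its poset of nonempty open sets under reverse inclusion
is upwards-σ-centered. -/
def SigmaCenteredSpace (X : Type) [TopologicalSpace X] : Prop :=
  UpSigmaCentered (NonemptyOpens X)

/-- `x` is way below `y` if for every directed set `D`, `y ≤ sSup D` implies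
`x ≤ d` for some `d ∈ D`. -/
def WayBelow {L : Type} [CompleteLattice L] (x y : L) : Prop :=
  ∀ D : Set L, D.Nonempty → DirectedOn (· ≤ ·) D → y ≤ sSup D → ∃ d ∈ D, x ≤ d

/-- A complete lattice is upwards-continuous if for every `y` the set of elements
way below `y` is directed with supremum `y`. -/
def UpContinuousLat (L : Type) [CompleteLattice L] : Prop :=
  ∀ y : L, DirectedOn (· ≤ ·) {x : L | WayBelow x y} ∧ sSup {x : L | WayBelow x y} = y

/-- A lattice is distributive if it satisfies both distributive laws. -/
def DistribLat (L : Type) [CompleteLattice L] : Prop :=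
  ∀ a b c : L, a ⊓ (b ⊔ c) = (a ⊓ b) ⊔ (a ⊓ c) ∧ a ⊔ (b ⊓ c) = (a ⊔ b) ⊓ (a ⊔ c)

/-- A complete lattice is downwards-ccc if any uncountable subset has two distinct
members whose meet is not `⊥`. -/
def DownCCC (L : Type) [CompleteLattice L] : Prop :=
  ∀ S : Set L, ¬ S.Countable → ∃ x ∈ S, ∃ y ∈ S, x ≠ y ∧ x ⊓ y ≠ ⊥

/-- The nonbottom elements of a complete lattice. -/
def NonBot (L : Type) [CompleteLattice L] : Type := {x : L // x ≠ ⊥}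

/-- The nonbottom elements of a complete lattice, with the order reversed. -/
instance {L : Type} [CompleteLattice L] : PartialOrder (NonBot L) where
  le a b := b.1 ≤ a.1
  le_refl a := le_refl _
  le_trans a b c h₁ h₂ := le_trans h₂ h₁
  le_antisymm a b h₁ h₂ := Subtype.ext (le_antisymm h₂ h₁)

/-- A complete lattice is downwards-σ-centered if its set of nonbottom elements,
with the order reversed, is upwards-σ-centered. -/
def DownSigmaCentered (L : Type) [CompleteLattice L] : Prop :=
  UpSigmaCentered (NonBot L)

/-- An element `x` is a non-zero divisor if `x ⊓ y ≠ ⊥` for every `y ≠ ⊥`. -/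
def IsNZDiv {L : Type} [CompleteLattice L] (x : L) : Prop :=
  ∀ y : L, y ≠ ⊥ → x ⊓ y ≠ ⊥

/-- An element `p` is irreducible if `p = a ⊓ b` implies `p = a` or `p = b`. -/
def IrredElem {L : Type} [CompleteLattice L] (p : L) : Prop :=
  ∀ a b : L, p = a ⊓ b → p = a ∨ p = b
/-- The order of Proposition 1's proof: `O₁ ≤ O₂` iff `O₁ = O₂` or `O₂` is compact in `O₁`. -/
def CpOrder {X : Type} [TopologicalSpace X] (O₁ O₂ : NonemptyOpens X) : Prop :=
  O₁ = O₂ ∨ CompactIn O₂.1 O₁.1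

lemma compactIn_of_compact {X : Type} [TopologicalSpace X] {K U O : Set X}
    (hK : IsCompact K) (hU : U ⊆ K) (hKO : K ⊆ O) : CompactIn U O := by
  intro 𝒞 hop hcov
  obtain ⟨t, ht⟩ := hK.elim_finite_subcover (fun W : 𝒞 => (W : Set X))
    (fun W => hop W W.2) (by
      intro x hx
      obtain ⟨W, hW, hxW⟩ := hcov (hKO hx)
      exact Set.mem_iUnion.2 ⟨⟨W, hW⟩, hxW⟩)
  refine ⟨Subtype.val '' (t : Set 𝒞), ?_, (t.finite_toSet.image _), ?_⟩
  · rintro _ ⟨W, _, rfl⟩; exact W.2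
  · intro x hx
    obtain ⟨W, hWt, hxW⟩ := Set.mem_iUnion₂.1 (ht (hU hx))
    exact ⟨W, ⟨W, hWt, rfl⟩, hxW⟩

lemma compactIn_subset {X : Type} [TopologicalSpace X] {U O : Set X}
    (hO : IsOpen O) (h : CompactIn U O) : U ⊆ O := by
  obtain ⟨𝒻, h𝒻, _, hsub⟩ := h {O} (by rintro W rfl; exact hO)
    (by intro x hx; exact ⟨O, rfl, hx⟩)
  refine hsub.trans ?_
  intro x hx
  obtain ⟨W, hW, hxW⟩ := hx
  rcases h𝒻 hW with rfl
  exact hxW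

lemma cpOrder_subset {X : Type} [TopologicalSpace X] {O₁ O₂ : NonemptyOpens X}
    (h : CpOrder O₁ O₂) : O₂.1 ⊆ O₁.1 := by
  rcases h with rfl | h
  · exact subset_rfl
  · exact compactIn_subset O₁.2.1 h

/-- For a locally compact space X and the poset P of nonempty open sets
ordered by `CpOrder`: two elements have a common upper bound iff they intersect;
hence if X is ccc then P is upwards-ccc; and for every dense open set O* the set
`{O ∈ P : O ⊆ O*}` is cofinal. -/
theorem statement14 (X : Type) [TopologicalSpace X] (hlc : LocCompactSp X) :
    (∀ O₁ O₂ : NonemptyOpens X,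
      (∃ O₃ : NonemptyOpens X, CpOrder O₁ O₃ ∧ CpOrder O₂ O₃) ↔ (O₁.1 ∩ O₂.1).Nonempty) ∧
    (CCCSpace X → ∀ S : Set (NonemptyOpens X), ¬ S.Countable →
      ∃ a ∈ S, ∃ b ∈ S, a ≠ b ∧ ∃ c : NonemptyOpens X, CpOrder a c ∧ CpOrder b c) ∧
    (∀ Ostar : Set X, IsOpen Ostar → Dense Ostar →
      ∀ p : NonemptyOpens X, ∃ q : NonemptyOpens X, q.1 ⊆ Ostar ∧ CpOrder p q) := by
  have main : ∀ O₁ O₂ : NonemptyOpens X,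
      (∃ O₃ : NonemptyOpens X, CpOrder O₁ O₃ ∧ CpOrder O₂ O₃) ↔ (O₁.1 ∩ O₂.1).Nonempty := by
    intro O₁ O₂
    constructor
    · rintro ⟨O₃, h₁, h₂⟩
      obtain ⟨x, hx⟩ := O₃.2.2
      exact ⟨x, cpOrder_subset h₁ hx, cpOrder_subset h₂ hx⟩
    · rintro ⟨x, hx₁, hx₂⟩
      have hopen : IsOpen (O₁.1 ∩ O₂.1) := O₁.2.1.inter O₂.2.1
      obtain ⟨K, U, hK, hUo, hxU, hUK, hKO⟩ := hlc _ hopen x ⟨hx₁, hx₂⟩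
      refine ⟨⟨U, hUo, ⟨x, hxU⟩⟩, Or.inr ?_, Or.inr ?_⟩
      · exact compactIn_of_compact hK hUK (hKO.trans Set.inter_subset_left)
      · exact compactIn_of_compact hK hUK (hKO.trans Set.inter_subset_right)
  refine ⟨main, ?_, ?_⟩
  · intro hccc S hS
    have hS' : ¬ (Subtype.val '' S : Set (Set X)).Countable := by
      intro h
      exact hS (Set.Countable.mono (Set.subset_preimage_image _ _)
        (h.preimage Subtype.val_injective))
    obtain ⟨U, hU, V, hV, hUV, hne⟩ := hccc (Subtype.val '' S)
      (by rintro _ ⟨a, _, rfl⟩; exact a.2) hS'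
    obtain ⟨a, haS, rfl⟩ := hU
    obtain ⟨b, hbS, rfl⟩ := hV
    refine ⟨a, haS, b, hbS, fun h => hUV (by rw [h]), (main a b).2 hne⟩
  · intro Ostar hOo hOd p
    have hne : (p.1 ∩ Ostar).Nonempty := by
      obtain ⟨x, hx⟩ := p.2.2
      obtain ⟨y, hy⟩ := hOd.inter_open_nonempty p.1 p.2.1 ⟨x, hx⟩
      exact ⟨y, hy⟩
    obtain ⟨x, hx⟩ := hne
    obtain ⟨K, U, hK, hUo, hxU, hUK, hKO⟩ := hlc _ (p.2.1.inter hOo) x hx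
    refine ⟨⟨U, hUo, ⟨x, hxU⟩⟩, (hUK.trans hKO).trans Set.inter_subset_right,
      Or.inr (compactIn_of_compact hK hUK (hKO.trans Set.inter_subset_left))⟩
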